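/- Let D ⊆ ℂ be open and let f : D → ℂ be holomorphic with f′(z) ≠ 0 for every z ∈ D, and let U(z) = log(|f′(z)| / (1 + |f(z)|²)). Then for all z ∈ D, ∂_z² U(z) − (∂_z U(z))² = ½ ( f′′′(z)/f′(z) − (3/2)(f′′(z)/f′(z))² ); that is, the W-invariant of the local solution U equals one half of the Schwarzian derivative of f. -/

import Mathlib

open Complex Filter

/-- The Wirtinger derivative `∂_z = ½(∂/∂x₁ − i ∂/∂x₂)` on `ℂ ≃ ℝ²`, `z = x₁ + i x₂`. -/
noncomputable def wz (f : ℂ → ℂ) (z : ℂ) : ℂ :=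
  (fderiv ℝ f z 1 - Complex.I * fderiv ℝ f z Complex.I) / 2

lemma wz_congr {g h : ℂ → ℂ} {z : ℂ} (hgh : g =ᶠ[nhds z] h) : wz g z = wz h z := by
  unfold wz; rw [hgh.fderiv_eq]

lemma wz_holo {g : ℂ → ℂ} {z : ℂ} (hg : DifferentiableAt ℂ g z) : wz g z = deriv g z := by
  unfold wz
  rw [hg.fderiv_restrictScalars ℝ]
  simp only [ContinuousLinearMap.coe_restrictScalars']
  have h1 : fderiv ℂ g z 1 = deriv g z := by simp [fderiv_apply_one_eq_deriv]
  have hI : fderiv ℂ g z Complex.I = Complex.I * deriv g z := by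
    have := (fderiv ℂ g z).map_smul Complex.I (1 : ℂ)
    simpa [smul_eq_mul, h1] using this
  rw [h1, hI]
  ring_nf
  rw [Complex.I_sq]
  ring

lemma wz_conj_holo {g : ℂ → ℂ} {z : ℂ} (hg : DifferentiableAt ℂ g z) :
    wz (fun w => starRingEnd ℂ (g w)) z = 0 := by
  unfold wz
  have hc : fderiv ℝ (fun w => starRingEnd ℂ (g w)) z
      = (Complex.conjCLE.toContinuousLinearMap).comp (fderiv ℝ g z) := by
    exact fderiv_comp z (Complex.conjCLE.toContinuousLinearMap.differentiableAt)
      (hg.restrictScalars ℝ) |>.trans (by rw [ContinuousLinearMap.fderiv])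
  rw [hc]
  rw [hg.fderiv_restrictScalars ℝ]
  simp only [ContinuousLinearMap.coe_comp', Function.comp_apply,
    ContinuousLinearMap.coe_restrictScalars']
  have h1 : fderiv ℂ g z 1 = deriv g z := by simp [fderiv_apply_one_eq_deriv]
  have hI : fderiv ℂ g z Complex.I = Complex.I * deriv g z := by
    have := (fderiv ℂ g z).map_smul Complex.I (1 : ℂ)
    simpa [smul_eq_mul, h1] using this
  rw [h1, hI]
  simp [Complex.conjCLE_apply, map_mul]
  ring_nf
  rw [Complex.I_sq]
  ring

lemma wz_comp_holo {g G : ℂ → ℂ} {z : ℂ} (hg : DifferentiableAt ℂ g (G z))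
    (hG : DifferentiableAt ℝ G z) :
    wz (fun w => g (G w)) z = deriv g (G z) * wz G z := by
  unfold wz
  have hc : fderiv ℝ (fun w => g (G w)) z = (fderiv ℝ g (G z)).comp (fderiv ℝ G z) :=
    fderiv_comp z (hg.restrictScalars ℝ) hG
  rw [hc, hg.fderiv_restrictScalars ℝ]
  simp only [ContinuousLinearMap.coe_comp', Function.comp_apply,
    ContinuousLinearMap.coe_restrictScalars']
  have key : ∀ v : ℂ, fderiv ℂ g (G z) v = deriv g (G z) * v := by
    intro v
    have := (fderiv ℂ g (G z)).map_smul v (1 : ℂ)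
    simpa [smul_eq_mul, fderiv_apply_one_eq_deriv, mul_comm] using this
  rw [key, key]
  ring

lemma wz_mul {g h : ℂ → ℂ} {z : ℂ} (hg : DifferentiableAt ℝ g z)
    (hh : DifferentiableAt ℝ h z) :
    wz (fun w => g w * h w) z = g z * wz h z + h z * wz g z := by
  unfold wz
  rw [fderiv_fun_mul hg hh]
  simp only [ContinuousLinearMap.add_apply, ContinuousLinearMap.smul_apply, smul_eq_mul]
  ring

lemma wz_add {g h : ℂ → ℂ} {z : ℂ} (hg : DifferentiableAt ℝ g z)
    (hh : DifferentiableAt ℝ h z) :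
    wz (fun w => g w + h w) z = wz g z + wz h z := by
  unfold wz
  rw [fderiv_fun_add hg hh]
  simp only [ContinuousLinearMap.add_apply]
  ring

lemma wz_sub {g h : ℂ → ℂ} {z : ℂ} (hg : DifferentiableAt ℝ g z)
    (hh : DifferentiableAt ℝ h z) :
    wz (fun w => g w - h w) z = wz g z - wz h z := by
  unfold wz
  rw [fderiv_fun_sub hg hh]
  simp only [ContinuousLinearMap.sub_apply]
  ring

lemma wz_div_const {g : ℂ → ℂ} {z : ℂ} (hg : DifferentiableAt ℝ g z) (c : ℂ) :
    wz (fun w => g w / c) z = wz g z / c := by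
  unfold wz
  simp only [div_eq_inv_mul]
  rw [fderiv_const_mul hg]
  simp only [ContinuousLinearMap.smul_apply, smul_eq_mul]
  ring

lemma wz_const (z c : ℂ) : wz (fun _ => c) z = 0 := by
  unfold wz
  simp [fderiv_const]

lemma wz_inv {G : ℂ → ℂ} {z : ℂ} (hG : DifferentiableAt ℝ G z) (h0 : G z ≠ 0) :
    wz (fun w => (G w)⁻¹) z = -wz G z / (G z) ^ 2 := by
  have := wz_comp_holo (g := fun w => w⁻¹) (differentiableAt_inv h0) hG
  rw [this, deriv_inv]
  ring

lemma diff_conj_comp {g : ℂ → ℂ} {z : ℂ} (hg : DifferentiableAt ℝ g z) :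
    DifferentiableAt ℝ (fun w => starRingEnd ℂ (g w)) z :=
  Complex.conjCLE.differentiableAt.comp z hg

lemma diff_log_comp {G : ℂ → ℂ} {z : ℂ} (hG : DifferentiableAt ℝ G z)
    (hs : G z ∈ Complex.slitPlane) :
    DifferentiableAt ℝ (fun w => Complex.log (G w)) z :=
  ((Complex.differentiableAt_log hs).restrictScalars ℝ).comp z hG

/-- For the local solution `U(z) = log(|f′(z)|/(1+|f(z)|²))` of the
Liouville equation attached to a holomorphic `f` with nowhere vanishing derivative,
the W-invariant `∂_z² U − (∂_z U)²` equals one half of the Schwarzian derivative of `f`. -/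
theorem liouville_w_invariant_eq_half_schwarzian (D : Set ℂ) (hD : IsOpen D) (f : ℂ → ℂ)
    (hf : DifferentiableOn ℂ f D) (hf' : ∀ z ∈ D, deriv f z ≠ 0)
    (U : ℂ → ℝ)
    (hU : ∀ z ∈ D, U z = Real.log (‖deriv f z‖ / (1 + ‖f z‖ ^ 2))) :
    ∀ z ∈ D,
      wz (wz (fun w => (U w : ℂ))) z - (wz (fun w => (U w : ℂ)) z) ^ 2 =
        (1 / 2) * (deriv (deriv (deriv f)) z / deriv f z
          - (3 / 2) * (deriv (deriv f) z / deriv f z) ^ 2) := by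
  have hfa : AnalyticOnNhd ℂ f D := hf.analyticOnNhd hD
  have h1a : AnalyticOnNhd ℂ (deriv f) D := hfa.deriv
  have h2a : AnalyticOnNhd ℂ (deriv (deriv f)) D := h1a.deriv
  -- the first Wirtinger derivative
  set P : ℂ → ℂ := fun w => deriv (deriv f) w / (2 * deriv f w)
      - deriv f w * starRingEnd ℂ (f w) / (1 + f w * starRingEnd ℂ (f w)) with hPdef
  have hE2ne : ∀ w, (1 : ℂ) + f w * starRingEnd ℂ (f w) ≠ 0 := by
    intro w
    have h : (0:ℝ) < 1 + Complex.normSq (f w) := by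
      have := Complex.normSq_nonneg (f w); linarith
    rw [Complex.mul_conj]
    exact_mod_cast h.ne'
  have hP : ∀ w ∈ D, wz (fun x => (U x : ℂ)) w = P w := by
    intro w hw
    have hdf : DifferentiableAt ℂ f w := (hfa w hw).differentiableAt
    have hd1 : DifferentiableAt ℂ (deriv f) w := (h1a w hw).differentiableAt
    have hane : deriv f w ≠ 0 := hf' w hw
    have hE : (fun x => (U x : ℂ)) =ᶠ[nhds w]
        fun x => Complex.log (deriv f x * starRingEnd ℂ (deriv f x)) / 2
          - Complex.log (1 + f x * starRingEnd ℂ (f x)) := by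
      filter_upwards [hD.mem_nhds hw] with x hx
      have hax : ‖deriv f x‖ ≠ 0 := by simpa using hf' x hx
      have hnn : (0:ℝ) ≤ 1 + Complex.normSq (f x) := by
        have := Complex.normSq_nonneg (f x); linarith
      have hbx : (1 + ‖f x‖ ^ 2) ≠ 0 := by positivity
      rw [hU x hx, Real.log_div hax hbx, Complex.norm_def,
        Real.log_sqrt (Complex.normSq_nonneg _), Complex.sq_norm]
      push_cast [Complex.ofReal_log (Complex.normSq_nonneg (deriv f x)),
        Complex.ofReal_log hnn]
      rw [Complex.mul_conj, Complex.mul_conj]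
    rw [wz_congr hE]
    have hg1R : DifferentiableAt ℝ (deriv f) w := hd1.restrictScalars ℝ
    have hfR : DifferentiableAt ℝ f w := hdf.restrictScalars ℝ
    have hE1R : DifferentiableAt ℝ (fun x => deriv f x * starRingEnd ℂ (deriv f x)) w :=
      hg1R.mul (diff_conj_comp hg1R)
    have hE2R : DifferentiableAt ℝ (fun x => 1 + f x * starRingEnd ℂ (f x)) w :=
      (differentiableAt_const 1).add (hfR.mul (diff_conj_comp hfR))
    have hs1 : deriv f w * starRingEnd ℂ (deriv f w) ∈ Complex.slitPlane := by
      rw [Complex.mul_conj, Complex.mem_slitPlane_iff]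
      exact Or.inl (by simpa using Complex.normSq_pos.mpr hane)
    have hs2 : (1 : ℂ) + f w * starRingEnd ℂ (f w) ∈ Complex.slitPlane := by
      rw [Complex.mul_conj, Complex.mem_slitPlane_iff]
      left
      have := Complex.normSq_nonneg (f w)
      simp only [Complex.add_re, Complex.one_re, Complex.ofReal_re]
      linarith
    have hlog1 : DifferentiableAt ℝ
        (fun x => Complex.log (deriv f x * starRingEnd ℂ (deriv f x)) / 2) w :=
      by simp only [div_eq_mul_inv]; exact (diff_log_comp hE1R hs1).mul_const _
    rw [wz_sub hlog1 (diff_log_comp hE2R hs2)]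
    rw [wz_div_const (diff_log_comp hE1R hs1)]
    rw [wz_comp_holo (g := Complex.log)
          (G := fun x => deriv f x * starRingEnd ℂ (deriv f x))
          (Complex.differentiableAt_log hs1) hE1R,
        wz_comp_holo (g := Complex.log)
          (G := fun x => 1 + f x * starRingEnd ℂ (f x))
          (Complex.differentiableAt_log hs2) hE2R]
    rw [(Complex.hasDerivAt_log hs1).deriv, (Complex.hasDerivAt_log hs2).deriv]
    rw [wz_mul hg1R (diff_conj_comp hg1R), wz_conj_holo hd1, wz_holo hd1]
    rw [wz_add (g := fun _ => (1 : ℂ)) (h := fun x => f x * starRingEnd ℂ (f x))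
          (differentiableAt_const 1) (hfR.mul (diff_conj_comp hfR)), wz_const,
        wz_mul hfR (diff_conj_comp hfR), wz_conj_holo hdf, wz_holo hdf]
    have hcane : starRingEnd ℂ (deriv f w) ≠ 0 := by simpa using hane
    simp only [hPdef]
    have h2a : (2:ℂ) * deriv f w ≠ 0 := mul_ne_zero two_ne_zero hane
    field_simp [hane, hcane, hE2ne w, h2a]
    ring
  intro z hz
  have hdf : DifferentiableAt ℂ f z := (hfa z hz).differentiableAt
  have hd1 : DifferentiableAt ℂ (deriv f) z := (h1a z hz).differentiableAt
  have hd2 : DifferentiableAt ℂ (deriv (deriv f)) z := (h2a z hz).differentiableAt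
  have hane : deriv f z ≠ 0 := hf' z hz
  have hev : wz (fun x => (U x : ℂ)) =ᶠ[nhds z] P := by
    filter_upwards [hD.mem_nhds hz] with x hx using hP x hx
  rw [wz_congr hev, hP z hz]
  have hfR : DifferentiableAt ℝ f z := hdf.restrictScalars ℝ
  have hg1R : DifferentiableAt ℝ (deriv f) z := hd1.restrictScalars ℝ
  have hE2R : DifferentiableAt ℝ (fun x => 1 + f x * starRingEnd ℂ (f x)) z :=
    (differentiableAt_const 1).add (hfR.mul (diff_conj_comp hfR))
  have hnum : DifferentiableAt ℝ (fun x => deriv f x * starRingEnd ℂ (f x)) z :=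
    hg1R.mul (diff_conj_comp hfR)
  have h2ne : (2 : ℂ) * deriv f z ≠ 0 := mul_ne_zero two_ne_zero hane
  have hHc : DifferentiableAt ℂ (fun x => deriv (deriv f) x / (2 * deriv f x)) z :=
    hd2.div (hd1.const_mul 2) h2ne
  have hQR : DifferentiableAt ℝ
      (fun x => deriv f x * starRingEnd ℂ (f x) * (1 + f x * starRingEnd ℂ (f x))⁻¹) z :=
    hnum.mul (hE2R.inv (hE2ne z))
  simp only [hPdef, div_eq_mul_inv]
  have hHc' : DifferentiableAt ℂ (fun w => deriv (deriv f) w * (2 * deriv f w)⁻¹) z :=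
    hd2.mul ((hd1.const_mul 2).inv h2ne)
  rw [wz_sub (hHc'.restrictScalars ℝ) hQR]
  rw [wz_holo hHc', (show HasDerivAt (fun w => deriv (deriv f) w * (2 * deriv f w)⁻¹) _ z from
    (hd2.hasDerivAt).mul ((hd1.hasDerivAt.const_mul 2).inv h2ne)).deriv]
  rw [wz_mul (h := fun x => (1 + f x * starRingEnd ℂ (f x))⁻¹) hnum (hE2R.inv (hE2ne z)), wz_inv hE2R (hE2ne z),
      wz_add (g := fun _ => (1 : ℂ)) (h := fun x => f x * starRingEnd ℂ (f x))
          (differentiableAt_const 1) (hfR.mul (diff_conj_comp hfR)), wz_const,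
      wz_mul hfR (diff_conj_comp hfR), wz_conj_holo hdf, wz_holo hdf,
      wz_mul hg1R (diff_conj_comp hfR), wz_conj_holo hdf, wz_holo hd1]
  field_simp [hane, hE2ne z, h2ne,
    (by rw [mul_comm]; exact hE2ne z : (1:ℂ) + starRingEnd ℂ (f z) * f z ≠ 0)]
  ring
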